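/- Let 1/(8r²) ≤ α ≤ 1/(4r²) and suppose Z is a stationary (KKT) point. Fix i ∈ {1,…,N} with T₁(i) and T₂(i) nonempty, let k ≠ y(i), and assume |D(k)| = |D(y(i))| = |T₁(i)| + |T₂(i)|. Let d_T ∈ [0, r²] and δ_T ∈ [0, r²], and set q_T' = P_{(j,l)∈T₂(i)×T₁(i)}[z_jᵀz_l ≤ d_T] and σ = P_{(j,l)∈T₂(i)×T₂(i)}[z_jᵀz_l ≤ δ_T]. Then |D(k)| · (E_{(j,l)∈T₂(i)×D(k)}[z_jᵀz_l])² ≤ N r⁴/d + 30·|T₂(i)|·r⁴ − |D(k)|·d_T² + |T₁(i)|·q_T'·d_T² + |T₂(i)|·σ·δ_T². -/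

import Mathlib

open Finset
open scoped BigOperators RealInnerProductSpace

/-- The set of indices whose label is `k`. -/
def classSet {N K : ℕ} (y : Fin N → Fin K) (k : Fin K) : Finset (Fin N) :=
  Finset.univ.filter (fun j => y j = k)

/-- `T₂(i)`: the indices `j` with `ŵ i j = 1`. -/
def T2 {N : ℕ} (w : Fin N → Fin N → Bool) (i : Fin N) : Finset (Fin N) :=
  Finset.univ.filter (fun j => w i j = true)

/-- `T₁(i)`: the indices `j` in the class of `i` with `ŵ i j = 0`. -/
def T1 {N K : ℕ} (y : Fin N → Fin K) (w : Fin N → Fin N → Bool) (i : Fin N) :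
    Finset (Fin N) :=
  Finset.univ.filter (fun j => y j = y i ∧ w i j = false)

/-- `ŵ` as a real-valued (0/1) matrix entry. -/
def wR {N : ℕ} (w : Fin N → Fin N → Bool) (i j : Fin N) : ℝ := if w i j then 1 else 0

/-- The `d × N` matrix whose columns are the representations `z i`. -/
def Zmat {N d : ℕ} (z : Fin N → EuclideanSpace ℝ (Fin d)) : Matrix (Fin d) (Fin N) ℝ :=
  Matrix.of fun a i => z i a

/-- The graph Laplacian of the adjacency `a i j = ŵ i j + μ i j`. -/
noncomputable def Lmat {N : ℕ} (w : Fin N → Fin N → Bool) (μ : Fin N → Fin N → ℝ) :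
    Matrix (Fin N) (Fin N) ℝ :=
  Matrix.of fun i j =>
    if i = j then ∑ k ∈ Finset.univ.erase i, (wR w i k + μ i k) else -(wR w i j + μ i j)

/-- The feature correlation matrix `C = (1/N) ∑ i, z i (z i)ᵀ`. -/
noncomputable def Cmat {N d : ℕ} (z : Fin N → EuclideanSpace ℝ (Fin d)) :
    Matrix (Fin d) (Fin d) ℝ :=
  ((N : ℝ))⁻¹ • ∑ i, Matrix.of (fun a b => z i a * z i b)

/-- Stationarity (KKT) equation `Z L + 2 α N (C − (r²/d) I_d) Z = 0`
for the multipliers `μ`. -/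
def IsKKT {N d : ℕ} (z : Fin N → EuclideanSpace ℝ (Fin d)) (w : Fin N → Fin N → Bool)
    (μ : Fin N → Fin N → ℝ) (α r : ℝ) : Prop :=
  Zmat z * Lmat w μ + (2 * α * (N : ℝ)) •
    ((Cmat z - (r ^ 2 / (d : ℝ)) • (1 : Matrix (Fin d) (Fin d) ℝ)) * Zmat z) = 0

/-- Uniform average of `f` over `S × T`. -/
noncomputable def avg2 {N : ℕ} (S T : Finset (Fin N)) (f : Fin N → Fin N → ℝ) : ℝ :=
  (∑ j ∈ S, ∑ l ∈ T, f j l) / ((S.card : ℝ) * (T.card : ℝ))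

open scoped Classical in
/-- The fraction of pairs of `S × T` satisfying `p`. -/
noncomputable def frac2 {N : ℕ} (S T : Finset (Fin N)) (p : Fin N → Fin N → Prop) : ℝ :=
  (((S ×ˢ T).filter (fun q => p q.1 q.2)).card : ℝ) / ((S.card : ℝ) * (T.card : ℝ))

lemma key_bound {N d : ℕ} (hN : 1 ≤ N) (r : ℝ) (hr : 0 < r)
    (z : Fin N → EuclideanSpace ℝ (Fin d)) (hz : ∀ i, ‖z i‖ = r)
    (w : Fin N → Fin N → Bool) (hsym : ∀ i j, w i j = w j i)
    (μ : Fin N → Fin N → ℝ) (hμsym : ∀ i j, μ i j = μ j i)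
    (hμpos : ∀ i j, i ≠ j → 0 ≤ μ i j)
    (α : ℝ) (hα : 0 < α) (hkkt : IsKKT z w μ α r)
    (j : Fin N) : ∑ m, ⟪z m, z j⟫ ^ 2 ≤ N * r ^ 4 / d := by
  have hNpos : (0:ℝ) < N := by exact_mod_cast hN
  set B : Matrix (Fin d) (Fin N) ℝ :=
    (Cmat z - (r ^ 2 / (d : ℝ)) • (1 : Matrix (Fin d) (Fin d) ℝ)) * Zmat z with hB
  have h1 : ∀ a : Fin d, (Zmat z * Lmat w μ) a j + (2 * α * (N : ℝ)) * B a j = 0 := by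
    intro a
    have := congrFun (congrFun hkkt a) j
    simpa [Matrix.add_apply, Matrix.smul_apply, smul_eq_mul] using this
  have hip : ∀ u v : Fin N, ⟪z u, z v⟫ = ∑ a, z u a * z v a := by
    intro u v
    simp [PiLp.inner_apply, RCLike.inner_apply, mul_comm]
  have hself : ∀ u, ⟪z u, z u⟫ = r ^ 2 := by
    intro u
    rw [real_inner_self_eq_norm_sq, hz]
  have h2 : (∑ a, z j a * (Zmat z * Lmat w μ) a j)
      + (2 * α * (N : ℝ)) * (∑ a, z j a * B a j) = 0 := by
    rw [mul_sum, ← Finset.sum_add_distrib]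
    rw [show (0:ℝ) = ∑ _a : Fin d, (0:ℝ) by simp]
    refine Finset.sum_congr rfl fun a _ => ?_
    linear_combination z j a * h1 a
  -- first term
  have e1 : (∑ a, z j a * (Zmat z * Lmat w μ) a j)
      = ∑ m ∈ Finset.univ.erase j, (wR w j m + μ j m) * (r ^ 2 - ⟪z j, z m⟫) := by
    have : (∑ a, z j a * (Zmat z * Lmat w μ) a j)
        = ∑ m, ⟪z j, z m⟫ * (Lmat w μ) m j := by
      simp only [Matrix.mul_apply, Finset.mul_sum]
      rw [Finset.sum_comm]
      refine Finset.sum_congr rfl fun m _ => ?_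
      rw [hip j m, Finset.sum_mul]
      refine Finset.sum_congr rfl fun a _ => ?_
      simp [Zmat]
      ring
    rw [this]
    rw [← Finset.add_sum_erase _ _ (Finset.mem_univ j)]
    have hL : (Lmat w μ) j j = ∑ k ∈ Finset.univ.erase j, (wR w j k + μ j k) := by
      simp [Lmat]
    rw [hL, hself j, Finset.mul_sum]
    rw [← Finset.sum_add_distrib]
    refine Finset.sum_congr rfl fun m hm => ?_
    have hmj : m ≠ j := Finset.ne_of_mem_erase hm
    have hLm : (Lmat w μ) m j = -(wR w m j + μ m j) := by
      simp [Lmat, hmj]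
    rw [hLm]
    have : wR w m j = wR w j m := by simp [wR, hsym m j]
    rw [this, hμsym m j]
    ring
  -- second term
  have e2 : (∑ a, z j a * B a j)
      = (N:ℝ)⁻¹ * (∑ m, ⟪z m, z j⟫ ^ 2) - (r ^ 2 / d) * r ^ 2 := by
    have hBapply : ∀ a, B a j = (N:ℝ)⁻¹ * (∑ m, ⟪z m, z j⟫ * z m a) - (r^2/d) * z j a := by
      intro a
      rw [hB]
      rw [Matrix.sub_mul, Matrix.sub_apply, Matrix.smul_mul, Matrix.smul_apply,
        Matrix.one_mul]
      congr 1
      · rw [Matrix.mul_apply]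
        have hC : ∀ b, (Cmat z) a b = (N:ℝ)⁻¹ * ∑ m, z m a * z m b := by
          intro b
          simp [Cmat, Matrix.smul_apply, Matrix.sum_apply]
        simp only [hC, Zmat, Matrix.of_apply]
        simp only [Finset.sum_mul, Finset.mul_sum]
        rw [Finset.sum_comm]
        refine Finset.sum_congr rfl fun m _ => ?_
        rw [hip m j]
        simp only [Finset.sum_mul, Finset.mul_sum]
        refine Finset.sum_congr rfl fun x _ => ?_
        ring
    simp only [hBapply, mul_sub]
    rw [Finset.sum_sub_distrib]
    congr 1
    · simp only [Finset.mul_sum]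
      rw [Finset.sum_comm]
      refine Finset.sum_congr rfl fun m _ => ?_
      rw [pow_two]
      nth_rewrite 3 [hip m j]
      rw [Finset.mul_sum, Finset.mul_sum]
      refine Finset.sum_congr rfl fun a _ => ?_
      ring
    · have hs : ∑ a, z j a * z j a = r ^ 2 := by rw [← hip j j]; exact hself j
      have he : ∀ a : Fin d, z j a * ((r^2/(d:ℝ)) * z j a) = (r^2/(d:ℝ)) * (z j a * z j a) :=
        fun a => by ring
      simp only [he]
      rw [← Finset.mul_sum, hs]
  -- assemble
  rw [e1, e2] at h2
  have hnn : 0 ≤ ∑ m ∈ Finset.univ.erase j, (wR w j m + μ j m) * (r ^ 2 - ⟪z j, z m⟫) := by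
    refine Finset.sum_nonneg fun m hm => mul_nonneg ?_ ?_
    · have h1 : (0:ℝ) ≤ wR w j m := by unfold wR; positivity
      have h2 : (0:ℝ) ≤ μ j m := hμpos j m (Finset.ne_of_mem_erase hm).symm
      linarith
    · have := real_inner_le_norm (z j) (z m)
      rw [hz j, hz m] at this
      nlinarith
  set S := ∑ m, ⟪z m, z j⟫ ^ 2 with hS
  have h3 : (N:ℝ)⁻¹ * S - (r^2/(d:ℝ))*r^2 ≤ 0 := by
    by_contra hcon
    push_neg at hcon
    nlinarith [mul_pos (mul_pos (mul_pos two_pos hα) hNpos) hcon]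
  have h4 : S ≤ (N:ℝ) * ((r^2/(d:ℝ))*r^2) := by
    have h5 := mul_le_mul_of_nonneg_left (sub_nonpos.mp h3) (le_of_lt hNpos)
    rw [← mul_assoc, mul_inv_cancel₀ hNpos.ne', one_mul] at h5
    exact h5
  have h6 : (N:ℝ) * ((r^2/(d:ℝ))*r^2) = (N:ℝ) * r^4 / (d:ℝ) := by ring
  linarith


set_option maxHeartbeats 1000000 in
theorem stmt_9
    (N d K : ℕ) (hN : 1 ≤ N) (hd : 1 ≤ d) (hK : 1 ≤ K)
    (r : ℝ) (hr : 0 < r)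
    (z : Fin N → EuclideanSpace ℝ (Fin d)) (hz : ∀ i, ‖z i‖ = r)
    (y : Fin N → Fin K)
    (hD : ∀ k, (classSet y k).Nonempty)
    (w : Fin N → Fin N → Bool)
    (hsym : ∀ i j, w i j = w j i)
    (hdiag : ∀ i, w i i = true)
    (hcls : ∀ i j, w i j = true → y i = y j)
    (htrans : ∀ i j k, w i j = true → w j k = true → w i k = true)
    (α : ℝ) (hα₁ : 1 / (8 * r ^ 2) ≤ α) (hα₂ : α ≤ 1 / (4 * r ^ 2))
    (hstat : ∃ μ : Fin N → Fin N → ℝ,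
      (∀ i j, μ i j = μ j i) ∧ (∀ i, μ i i = 0) ∧
      (∀ i j, i ≠ j → 0 ≤ μ i j) ∧ IsKKT z w μ α r)
    (i : Fin N) (hT1 : (T1 y w i).Nonempty) (hT2 : (T2 w i).Nonempty)
    (k : Fin K) (hk : k ≠ y i)
    (hcard₁ : (classSet y k).card = (classSet y (y i)).card)
    (hcard₂ : (classSet y (y i)).card = (T1 y w i).card + (T2 w i).card)
    (dT δT : ℝ) (hdT : dT ∈ Set.Icc (0 : ℝ) (r ^ 2)) (hδT : δT ∈ Set.Icc (0 : ℝ) (r ^ 2))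
    (qT' σ : ℝ)
    (hqT' : qT' = frac2 (T2 w i) (T1 y w i) (fun j l => ⟪z j, z l⟫ ≤ dT))
    (hσ : σ = frac2 (T2 w i) (T2 w i) (fun j l => ⟪z j, z l⟫ ≤ δT)) :
    ((classSet y k).card : ℝ) *
        (avg2 (T2 w i) (classSet y k) (fun j l => ⟪z j, z l⟫)) ^ 2 ≤
      (N : ℝ) * r ^ 4 / (d : ℝ) + 30 * ((T2 w i).card : ℝ) * r ^ 4 -
        ((classSet y k).card : ℝ) * dT ^ 2 +
        ((T1 y w i).card : ℝ) * qT' * dT ^ 2 +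
        ((T2 w i).card : ℝ) * σ * δT ^ 2 := by
  classical
  obtain ⟨μ, hμsym, hμdiag, hμpos, hkkt⟩ := hstat
  have hαpos : 0 < α := lt_of_lt_of_le (by positivity) hα₁
  have key : ∀ j : Fin N, ∑ m, ⟪z m, z j⟫ ^ 2 ≤ (N:ℝ) * r ^ 4 / (d:ℝ) :=
    key_bound hN r hr z hz w hsym μ hμsym hμpos α hαpos hkkt
  set Dk := classSet y k with hDk
  set T1i := T1 y w i with hT1i
  set T2i := T2 w i with hT2i
  set a := ((T2i.card : ℝ)) with ha'
  set b := ((T1i.card : ℝ)) with hb'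
  set c := ((Dk.card : ℝ)) with hc'
  have ha : (0:ℝ) < a := by
    rw [ha']; exact_mod_cast Finset.card_pos.mpr hT2
  have hb : (0:ℝ) < b := by
    rw [hb']; exact_mod_cast Finset.card_pos.mpr hT1
  have hcpos : (0:ℝ) < c := by
    rw [hc']; exact_mod_cast Finset.card_pos.mpr (hD k)
  have hcab : c = b + a := by
    rw [hc', hb', ha']
    have : Dk.card = T1i.card + T2i.card := hcard₁.trans hcard₂
    rw [this]; push_cast; ring
  -- disjointness
  have hd1 : Disjoint Dk T1i := by
    rw [Finset.disjoint_left]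
    intro l h1 h2
    rw [hDk, classSet, Finset.mem_filter] at h1
    rw [hT1i, T1, Finset.mem_filter] at h2
    exact hk (h1.2 ▸ h2.2.1)
  have hd2 : Disjoint Dk T2i := by
    rw [Finset.disjoint_left]
    intro l h1 h2
    rw [hDk, classSet, Finset.mem_filter] at h1
    rw [hT2i, T2, Finset.mem_filter] at h2
    exact hk (h1.2 ▸ (hcls i l h2.2).symm)
  have hd3 : Disjoint (Dk ∪ T1i) T2i := by
    refine Finset.disjoint_union_left.mpr ⟨hd2, ?_⟩
    rw [Finset.disjoint_left]
    intro l h1 h2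
    rw [hT1i, T1, Finset.mem_filter] at h1
    rw [hT2i, T2, Finset.mem_filter] at h2
    rw [h1.2.2] at h2
    exact Bool.false_ne_true h2.2
  -- per-j bound
  have perj : ∀ j : Fin N,
      ∑ l ∈ Dk, ⟪z j, z l⟫ ^ 2 ≤ (N:ℝ) * r ^ 4 / (d:ℝ)
        - ∑ l ∈ T1i, ⟪z j, z l⟫ ^ 2 - ∑ l ∈ T2i, ⟪z j, z l⟫ ^ 2 := by
    intro j
    have h1 : ∑ l ∈ (Dk ∪ T1i) ∪ T2i, ⟪z j, z l⟫ ^ 2 ≤ ∑ l, ⟪z j, z l⟫ ^ 2 :=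
      Finset.sum_le_sum_of_subset_of_nonneg (Finset.subset_univ _)
        (fun _ _ _ => sq_nonneg _)
    rw [Finset.sum_union hd3, Finset.sum_union hd1] at h1
    have h2 : ∑ l, ⟪z j, z l⟫ ^ 2 = ∑ m, ⟪z m, z j⟫ ^ 2 := by
      refine Finset.sum_congr rfl fun m _ => ?_
      rw [real_inner_comm]
    rw [h2] at h1
    have := key j
    linarith
  -- total
  set total := ∑ j ∈ T2i, ∑ l ∈ Dk, ⟪z j, z l⟫ ^ 2 with htotal
  set P1 := ∑ j ∈ T2i, ∑ l ∈ T1i, ⟪z j, z l⟫ ^ 2 with hP1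
  set P2 := ∑ j ∈ T2i, ∑ l ∈ T2i, ⟪z j, z l⟫ ^ 2 with hP2
  have htot : total ≤ a * ((N:ℝ) * r ^ 4 / (d:ℝ)) - P1 - P2 := by
    have h1 : total ≤ ∑ j ∈ T2i, ((N:ℝ) * r ^ 4 / (d:ℝ)
        - ∑ l ∈ T1i, ⟪z j, z l⟫ ^ 2 - ∑ l ∈ T2i, ⟪z j, z l⟫ ^ 2) :=
      Finset.sum_le_sum fun j _ => perj j
    rw [Finset.sum_sub_distrib, Finset.sum_sub_distrib, Finset.sum_const,
      nsmul_eq_mul] at h1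
    rw [hP1, hP2, ha']
    exact h1
  have htotnn : (0:ℝ) ≤ total :=
    Finset.sum_nonneg fun j _ => Finset.sum_nonneg fun l _ => sq_nonneg _
  -- pair bounds
  have pairbound : ∀ (S T : Finset (Fin N)) (t : ℝ), 0 ≤ t →
      ((S.card * T.card : ℕ) - (((S ×ˢ T).filter
        (fun q => ⟪z q.1, z q.2⟫ ≤ t)).card : ℝ)) * t ^ 2
        ≤ ∑ j ∈ S, ∑ l ∈ T, ⟪z j, z l⟫ ^ 2 := by
    intro S T t ht
    have hsp : ∑ j ∈ S, ∑ l ∈ T, ⟪z j, z l⟫ ^ 2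
        = ∑ q ∈ S ×ˢ T, ⟪z q.1, z q.2⟫ ^ 2 := by
      rw [Finset.sum_product]
    rw [hsp]
    rw [← Finset.sum_filter_add_sum_filter_not (S ×ˢ T)
      (fun q => ⟪z q.1, z q.2⟫ ≤ t)]
    have hA : (0:ℝ) ≤ ∑ q ∈ (S ×ˢ T).filter (fun q => ⟪z q.1, z q.2⟫ ≤ t),
        ⟪z q.1, z q.2⟫ ^ 2 := Finset.sum_nonneg fun q _ => sq_nonneg _
    have hB : (((S ×ˢ T).filter (fun q => ¬ ⟪z q.1, z q.2⟫ ≤ t)).card : ℝ) * t ^ 2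
        ≤ ∑ q ∈ (S ×ˢ T).filter (fun q => ¬ ⟪z q.1, z q.2⟫ ≤ t),
          ⟪z q.1, z q.2⟫ ^ 2 := by
      rw [← nsmul_eq_mul]
      refine Finset.card_nsmul_le_sum _ _ _ fun q hq => ?_
      have := (Finset.mem_filter.mp hq).2
      push_neg at this
      exact pow_le_pow_left₀ ht this.le 2
    have hcnt : (((S ×ˢ T).filter (fun q => ¬ ⟪z q.1, z q.2⟫ ≤ t)).card : ℝ)
        = ((S.card * T.card : ℕ) : ℝ)
          - (((S ×ˢ T).filter (fun q => ⟪z q.1, z q.2⟫ ≤ t)).card : ℝ) := by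
      have h := Finset.card_filter_add_card_filter_not
        (s := S ×ˢ T) (p := fun q => ⟪z q.1, z q.2⟫ ≤ t)
      rw [Finset.card_product] at h
      have h' : (((S ×ˢ T).filter (fun q => ⟪z q.1, z q.2⟫ ≤ t)).card : ℝ)
          + (((S ×ˢ T).filter (fun q => ¬ ⟪z q.1, z q.2⟫ ≤ t)).card : ℝ)
          = ((S.card * T.card : ℕ) : ℝ) := by exact_mod_cast h
      linarith
    rw [hcnt] at hB
    linarith
  have hD1 : (((T2i.card * T1i.card : ℕ) : ℝ) - (((T2i ×ˢ T1i).filter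
      (fun q => ⟪z q.1, z q.2⟫ ≤ dT)).card : ℝ)) * dT ^ 2 ≤ P1 :=
    pairbound T2i T1i dT hdT.1
  have hD2 : (((T2i.card * T2i.card : ℕ) : ℝ) - (((T2i ×ˢ T2i).filter
      (fun q => ⟪z q.1, z q.2⟫ ≤ δT)).card : ℝ)) * δT ^ 2 ≤ P2 :=
    pairbound T2i T2i δT hδT.1
  set c1 := (((T2i ×ˢ T1i).filter (fun q => ⟪z q.1, z q.2⟫ ≤ dT)).card : ℝ) with hc1
  set c2 := (((T2i ×ˢ T2i).filter (fun q => ⟪z q.1, z q.2⟫ ≤ δT)).card : ℝ) with hc2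
  have habne : a * b ≠ 0 := by positivity
  have haane : a * a ≠ 0 := by positivity
  have hT2ne : ((T2i.card : ℝ)) ≠ 0 := ne_of_gt (by rw [← ha']; exact ha)
  have hT1ne : ((T1i.card : ℝ)) ≠ 0 := ne_of_gt (by rw [← hb']; exact hb)
  have hq : qT' * (a * b) = c1 := by
    rw [hqT', ha', hb', hc1]
    unfold frac2
    field_simp
  have hs : σ * (a * a) = c2 := by
    rw [hσ, ha', hc2]
    unfold frac2
    field_simp
  -- Cauchy-Schwarz
  set Ssum := ∑ j ∈ T2i, ∑ l ∈ Dk, ⟪z j, z l⟫ with hSsum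
  have hcs : Ssum ^ 2 ≤ (a * c) * total := by
    have h := sq_sum_le_card_mul_sum_sq (s := T2i ×ˢ Dk)
      (f := fun q => ⟪z q.1, z q.2⟫)
    rw [Finset.card_product, Finset.sum_product, Finset.sum_product] at h
    rw [hSsum, htotal, ha', hc']
    calc Ssum ^ 2 ≤ ((T2i.card * Dk.card : ℕ) : ℝ) * total := by exact_mod_cast h
      _ = _ := by push_cast; ring
  -- the average
  have havg : avg2 T2i Dk (fun j l => ⟪z j, z l⟫) = Ssum / (a * c) := by
    unfold avg2
    rw [hSsum, ha', hc']
  rw [havg]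
  have hacpos : (0:ℝ) < a * c := mul_pos ha hcpos
  have step1 : c * (Ssum / (a * c)) ^ 2 ≤ total / a := by
    have h1 : c * (Ssum / (a * c)) ^ 2 = Ssum ^ 2 / (a ^ 2 * c) := by
      field_simp
    rw [h1, div_le_div_iff₀ (by positivity) ha]
    calc Ssum ^ 2 * a ≤ (a * c * total) * a := mul_le_mul_of_nonneg_right hcs ha.le
      _ = total * (a ^ 2 * c) := by ring
  -- counting casts
  have hcast1 : ((T2i.card * T1i.card : ℕ) : ℝ) = a * b := by
    rw [ha', hb']; push_cast; ring
  have hcast2 : ((T2i.card * T2i.card : ℕ) : ℝ) = a * a := by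
    rw [ha']; push_cast; ring
  rw [hcast1] at hD1
  rw [hcast2] at hD2
  have hdT4 : dT ^ 2 ≤ r ^ 4 := by nlinarith [hdT.1, hdT.2]
  have hδTnn : (0:ℝ) ≤ δT ^ 2 := sq_nonneg _
  have step2 : total / a ≤ (N : ℝ) * r ^ 4 / (d : ℝ) + 30 * a * r ^ 4 -
      c * dT ^ 2 + b * qT' * dT ^ 2 + a * σ * δT ^ 2 := by
    rw [div_le_iff₀ ha]
    have e1 : (a * b - qT' * (a * b)) * dT ^ 2 ≤ P1 := by rw [hq]; exact hD1
    have e2 : (a * a - σ * (a * a)) * δT ^ 2 ≤ P2 := by rw [hs]; exact hD2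
    have hfin : a * ((N : ℝ) * r ^ 4 / (d : ℝ))
        - (a * b - qT' * (a * b)) * dT ^ 2 - (a * a - σ * (a * a)) * δT ^ 2
        ≤ ((N : ℝ) * r ^ 4 / (d : ℝ) + 30 * a * r ^ 4 - c * dT ^ 2
            + b * qT' * dT ^ 2 + a * σ * δT ^ 2) * a := by
      rw [hcab]
      linarith [mul_le_mul_of_nonneg_left hdT4 (mul_nonneg ha.le ha.le),
        mul_nonneg (mul_nonneg ha.le ha.le) hδTnn,
        mul_nonneg (mul_nonneg ha.le ha.le) (sq_nonneg dT)]
    linarith [htot, e1, e2]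
  calc c * (Ssum / (a * c)) ^ 2 ≤ total / a := step1
    _ ≤ _ := step2
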